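/- Let L be the Laplacian of a strongly connected weighted digraph, r the positive row vector with rL = 0 and r·1_N = N, and R = diag(r_1,...,r_N). Then the matrix L̂ := RL + Lᵀ R is symmetric positive semi-definite and satisfies L̂·1_N = 0 and 1_Nᵀ·L̂ = 0. -/

import Mathlib

open Matrix BigOperators

/-- For the Laplacian `L` of a strongly connected weighted digraph and the positive
row vector `r` with `r L = 0`, `r ⬝ 1 = N`, and `R = diag r`, the matrix
`L̂ = R L + Lᵀ R` is symmetric positive semi-definite with `L̂ 1 = 0` and `1ᵀ L̂ = 0`. -/
theorem stmt_1 (N : ℕ) (hN : 0 < N) (a : Fin N → Fin N → ℝ)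
    (hnn : ∀ i j, 0 ≤ a i j) (hdiag : ∀ i, a i i = 0)
    (hconn : ∀ i j : Fin N, i ≠ j →
      Relation.TransGen (fun u v : Fin N => a v u ≠ 0) i j)
    (L : Matrix (Fin N) (Fin N) ℝ)
    (hL : L = Matrix.of fun i j => (if i = j then ∑ k, a i k else 0) - a i j)
    (r : Fin N → ℝ) (hrpos : ∀ i, 0 < r i)
    (hrL : Matrix.vecMul r L = 0) (hrsum : ∑ i, r i = N)
    (R : Matrix (Fin N) (Fin N) ℝ) (hR : R = Matrix.diagonal r) :
    (R * L + Lᵀ * R).PosSemidef ∧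
      (R * L + Lᵀ * R) *ᵥ (fun _ => (1 : ℝ)) = 0 ∧
      Matrix.vecMul (fun _ => (1 : ℝ)) (R * L + Lᵀ * R) = 0 := by
  -- column-sum identity from rL = 0
  have key : ∀ j, ∑ i, r i * a i j = r j * ∑ k, a j k := by
    intro j
    have h := congrFun hrL j
    simp only [Matrix.vecMul, dotProduct, hL, Matrix.of_apply, Pi.zero_apply] at h
    have h' : ∑ i, (r i * (if i = j then ∑ k, a i k else 0) - r i * a i j) = 0 :=
      (Finset.sum_congr rfl fun i _ => (mul_sub _ _ _).symm).trans h
    rw [Finset.sum_sub_distrib] at h'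
    have h2 : ∑ i, r i * (if i = j then ∑ k, a i k else 0) = r j * ∑ k, a j k := by
      rw [Finset.sum_eq_single j]
      · simp
      · intro b _ hb; simp [hb]
      · intro hj; simp at hj
    rw [h2] at h'
    linarith
  -- symmetry
  have hsym : (R * L + Lᵀ * R).IsHermitian := by
    unfold Matrix.IsHermitian
    subst hR
    rw [conjTranspose_eq_transpose_of_trivial, transpose_add, transpose_mul, transpose_mul,
      transpose_transpose, diagonal_transpose, add_comm]
  -- row sums of L are zero
  have hL1 : L *ᵥ (fun _ => (1 : ℝ)) = 0 := by
    funext i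
    simp only [Matrix.mulVec, dotProduct, hL, Matrix.of_apply, mul_one, Pi.zero_apply]
    simp [Finset.sum_sub_distrib]
  have hMv : (R * L + Lᵀ * R) *ᵥ (fun _ => (1 : ℝ)) = 0 := by
    rw [add_mulVec, ← mulVec_mulVec, hL1, ← mulVec_mulVec]
    have : R *ᵥ (fun _ => (1 : ℝ)) = r := by
      subst hR; funext i; simp [Matrix.mulVec, dotProduct, Matrix.diagonal]
    rw [this, mulVec_transpose, hrL]
    simp
  refine ⟨.of_dotProduct_mulVec_nonneg hsym ?_, hMv, ?_⟩
  · intro x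
    have hq : star x ⬝ᵥ ((R * L + Lᵀ * R) *ᵥ x) =
        ∑ i, ∑ j, r i * a i j * (x i - x j) ^ 2 := by
      have hRL : ∀ i j, (R * L + Lᵀ * R) i j = r i * L i j + L j i * r j := by
        intro i j
        subst hR
        simp [Matrix.mul_apply, Matrix.diagonal, Finset.sum_ite_eq, Finset.sum_ite_eq',
          mul_comm]
      have hsum : star x ⬝ᵥ ((R * L + Lᵀ * R) *ᵥ x) =
          ∑ i, ∑ j, x i * ((r i * L i j + L j i * r j) * x j) := by
        simp only [dotProduct, Matrix.mulVec, star_trivial]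
        rw [Finset.sum_congr rfl]
        intro i _
        rw [Finset.mul_sum]
        exact Finset.sum_congr rfl fun j _ => by rw [hRL]
      rw [hsum]
      have split : ∀ i j, x i * ((r i * L i j + L j i * r j) * x j)
          = x i * r i * L i j * x j + x j * r j * L j i * x i := by
        intro i j; ring
      simp only [split, Finset.sum_add_distrib]
      have flip : ∑ i, ∑ j, x j * r j * L j i * x i = ∑ i, ∑ j, x i * r i * L i j * x j := by
        rw [Finset.sum_comm]
      rw [flip]
      -- now goal: 2 * S1 = T
      have hS1 : ∑ i, ∑ j, x i * r i * L i j * x j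
          = (∑ i, r i * x i ^ 2 * ∑ k, a i k) - ∑ i, ∑ j, r i * a i j * x i * x j := by
        rw [← Finset.sum_sub_distrib]
        apply Finset.sum_congr rfl; intro i _
        have : ∀ j, x i * r i * L i j * x j
            = x i * r i * (if i = j then ∑ k, a i k else 0) * x j - r i * a i j * x i * x j := by
          intro j; rw [hL]; simp only [Matrix.of_apply]; ring
        simp only [this]
        rw [Finset.sum_sub_distrib]
        congr 1
        rw [Finset.sum_eq_single i]
        · simp; ring
        · intro b _ hb; simp [Ne.symm hb]
        · intro h; simp at h
      have hT : ∑ i, ∑ j, r i * a i j * (x i - x j) ^ 2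
          = 2 * ((∑ i, r i * x i ^ 2 * ∑ k, a i k) - ∑ i, ∑ j, r i * a i j * x i * x j) := by
        have expand : ∀ i j, r i * a i j * (x i - x j) ^ 2
            = r i * a i j * x i ^ 2 - 2 * (r i * a i j * x i * x j) + r i * a i j * x j ^ 2 := by
          intro i j; ring
        simp only [expand, Finset.sum_add_distrib, Finset.sum_sub_distrib, ← Finset.mul_sum]
        have hA : ∑ i, ∑ j, r i * a i j * x i ^ 2 = ∑ i, r i * x i ^ 2 * ∑ k, a i k := by
          apply Finset.sum_congr rfl; intro i _
          rw [Finset.mul_sum]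
          exact Finset.sum_congr rfl fun j _ => by ring
        have hC : ∑ i, ∑ j, r i * a i j * x j ^ 2 = ∑ i, r i * x i ^ 2 * ∑ k, a i k := by
          rw [Finset.sum_comm]
          apply Finset.sum_congr rfl; intro j _
          have : ∑ i, r i * a i j * x j ^ 2 = (∑ i, r i * a i j) * x j ^ 2 := by
            rw [Finset.sum_mul]
          rw [this, key j]
          ring
        rw [hA, hC]
        ring
      rw [hS1, hT]
      ring
    rw [hq]
    apply Finset.sum_nonneg; intro i _
    apply Finset.sum_nonneg; intro j _
    have := hrpos i
    have := hnn i j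
    positivity
  · have := hsym
    rw [Matrix.IsHermitian, conjTranspose_eq_transpose_of_trivial] at this
    rw [← Matrix.mulVec_transpose, this, hMv]
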